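/- Let A_i(2) = Σ_{n≥1} J_{i-n} J_{n-1}/(1+b) + b(i-1)J_{i-1}/(1+b), where J_i are the b-deformed currents. Then for all i, j ≥ 1, the operators A_i(2) satisfy the half-Virasoro commutation relation [A_i(2), A_j(2)] = (i-j)·A_{i+j-1}(2). -/

import Mathlib

open MvPolynomial

variable {K : Type*} [Field K]

/-- The `b`-deformed current `J_i` acting on `K[p_1, p_2, ...]` (with `X n = p_n` for `n ≥ 1`):
multiplication by `p_{-i}` for `i < 0`, `(1+b)·i·∂/∂p_i` for `i > 0`, and `0` for `i = 0`. -/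
noncomputable def Jc (b : K) (i : ℤ) : MvPolynomial ℕ K → MvPolynomial ℕ K :=
  if 0 < i then fun P => ((1 + b) * (i : K)) • pderiv i.toNat P
  else if i < 0 then fun P => X (-i).toNat * P
  else 0

/-- `p_i^* = i·∂/∂p_i`, with the convention `p_n^* = 0` for `n ≤ 0`. -/
noncomputable def pstar (i : ℤ) : MvPolynomial ℕ K → MvPolynomial ℕ K :=
  if 0 < i then fun P => (i : K) • pderiv i.toNat P else 0

/-- The operators `A_i(s)` : `A_i(0) = δ_{i,1}/(1+b)`,
`A_i(s+1) = Σ_{n ≥ 1} J_{i-n} A_n(s) + b(i-1) A_i(s)` (pointwise, locally finite sums). -/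
noncomputable def Aop (b : K) : ℕ → ℕ → MvPolynomial ℕ K → MvPolynomial ℕ K
  | 0, i => fun P => if i = 1 then (1 + b)⁻¹ • P else 0
  | s + 1, i => fun P =>
      (∑ᶠ n : ℕ, if 1 ≤ n then Jc b ((i : ℤ) - n) (Aop b s n P) else 0)
        + (b * ((i : K) - 1)) • Aop b s i P

/-- Commutator of operators (as functions). -/
noncomputable def commOp (f g : MvPolynomial ℕ K → MvPolynomial ℕ K) : MvPolynomial ℕ K → MvPolynomial ℕ K :=
  fun P => f (g P) - g (f P)

lemma pderiv_comm' (i j : ℕ) (P : MvPolynomial ℕ K) :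
    pderiv i (pderiv j P) = pderiv j (pderiv i P) := by
  induction P using MvPolynomial.induction_on' with
  | monomial s a =>
    by_cases hij : i = j
    · subst hij; rfl
    · simp only [pderiv_monomial]
      have hji : ¬ j = i := fun h => hij h.symm
      simp only [Finsupp.tsub_apply, Finsupp.single_apply, if_neg hij, if_neg hji, tsub_zero]
      rw [tsub_right_comm]
      congr 1
      ring
  | add p q hp hq => simp [map_add, hp, hq]



noncomputable def JL (b : K) (u : ℤ) : Module.End K (MvPolynomial ℕ K) :=
  if 0 < u then ((1 + b) * (u : K)) • (pderiv u.toNat).toLinearMap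
  else if u < 0 then LinearMap.mulLeft K (X (-u).toNat)
  else 0

lemma JL_apply (b : K) (u : ℤ) (P : MvPolynomial ℕ K) : JL b u P = Jc b u P := by
  unfold JL Jc
  split_ifs <;> rfl
lemma JL_pos (b : K) {u : ℤ} (h : 0 < u) (P : MvPolynomial ℕ K) :
    JL b u P = ((1 + b) * (u : K)) • pderiv u.toNat P := by
  unfold JL; rw [if_pos h]; rfl

lemma JL_neg (b : K) {u : ℤ} (h : u < 0) (P : MvPolynomial ℕ K) :
    JL b u P = X (-u).toNat * P := by
  unfold JL; rw [if_neg (by omega : ¬ (0:ℤ) < u), if_pos h]; rfl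

lemma JL_zero_idx (b : K) : JL b 0 = 0 := by
  unfold JL; simp

lemma JL_comm (b : K) (u v : ℤ) :
    JL b u * JL b v = JL b v * JL b u + (if u + v = 0 then (1 + b) * (u : K) else 0) • 1 := by
  refine LinearMap.ext fun P => ?_
  simp only [LinearMap.add_apply, Module.End.mul_apply, LinearMap.smul_apply, Module.End.one_apply]
  rcases lt_trichotomy u 0 with hu | hu | hu
  · rcases lt_trichotomy v 0 with hv | hv | hv
    · rw [JL_neg b hu, JL_neg b hv, JL_neg b hu, JL_neg b hv,
        if_neg (by omega : ¬ u + v = 0), zero_smul, add_zero]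
      ring
    · subst hv
      rw [JL_zero_idx, if_neg (by omega : ¬ u + 0 = 0), zero_smul, add_zero]
      simp only [LinearMap.zero_apply, map_zero]
    · -- u < 0, v > 0
      rw [JL_pos b hv, JL_neg b hu, JL_neg b hu, JL_pos b hv, pderiv_mul]
      by_cases huv : u + v = 0
      · have ht : (-u).toNat = v.toNat := by omega
        have hcast : ((u : ℤ) : K) = -((v : ℤ) : K) := by
          have h' : (u : ℤ) = -v := by omega
          rw [h']; push_cast; ring
        rw [if_pos huv, ht, pderiv_X_self, hcast, one_mul, smul_add, mul_smul_comm,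
          show (1 + b) * -((v:ℤ) : K) = -((1 + b) * ((v:ℤ) : K)) by ring, neg_smul]
        abel
      · have ht : ((-u).toNat : ℕ) ≠ v.toNat := by omega
        rw [if_neg huv, pderiv_X_of_ne ht, zero_mul, zero_add, zero_smul,
          add_zero, mul_smul_comm]
  · subst hu
    rw [JL_zero_idx]
    simp only [LinearMap.zero_apply, map_zero, zero_add]
    by_cases hv : v = 0 <;> simp [hv]
  · rcases lt_trichotomy v 0 with hv | hv | hv
    · -- u > 0, v < 0
      rw [JL_neg b hv, JL_pos b hu, JL_pos b hu, JL_neg b hv, pderiv_mul]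
      by_cases huv : u + v = 0
      · have ht : (-v).toNat = u.toNat := by omega
        rw [if_pos huv, ht, pderiv_X_self, one_mul, smul_add, mul_smul_comm]
        abel
      · have ht : ((-v).toNat : ℕ) ≠ u.toNat := by omega
        rw [if_neg huv, pderiv_X_of_ne ht, zero_mul, zero_add, zero_smul,
          add_zero, mul_smul_comm]
    · subst hv
      rw [JL_zero_idx, if_neg (by omega : ¬ u + 0 = 0), zero_smul, add_zero]
      simp only [LinearMap.zero_apply, map_zero]
    · rw [JL_pos b hv, JL_pos b hu, JL_pos b hu, JL_pos b hv,
        if_neg (by omega : ¬ u + v = 0), zero_smul, add_zero, Derivation.map_smul,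
        Derivation.map_smul, smul_smul, smul_smul, pderiv_comm',
        mul_comm ((1 + b) * ((u:ℤ) : K))]
noncomputable def Tl (b : K) (k M : ℕ) : Module.End K (MvPolynomial ℕ K) :=
  ∑ n ∈ Finset.range M, JL b ((k : ℤ) - n) * JL b (n : ℤ)

noncomputable def Sl (b : K) (k M : ℕ) : Module.End K (MvPolynomial ℕ K) :=
  Tl b k M + (b * (k : K)) • JL b (k : ℤ)

lemma sum_pick (M : ℕ) (w : ℤ) (F : Module.End K (MvPolynomial ℕ K)) :
    ∑ n ∈ Finset.range M, (if (n : ℤ) = w then F else 0) =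
      if 0 ≤ w ∧ w < M then F else 0 := by
  by_cases hw : 0 ≤ w ∧ w < (M : ℤ)
  · rw [if_pos hw]
    have hmem : w.toNat ∈ Finset.range M := Finset.mem_range.2 (by omega)
    rw [Finset.sum_eq_single_of_mem w.toNat hmem
      (fun n _ hne => if_neg (fun h => hne (by omega)))]
    exact if_pos (by omega)
  · rw [if_neg hw]
    refine Finset.sum_eq_zero fun n hn => if_neg fun h => ?_
    have := Finset.mem_range.1 hn
    exact hw ⟨by omega, by omega⟩

lemma Top_mul_JL (b : K) (k M : ℕ) (v : ℤ) :
    Tl b k M * JL b v = JL b v * Tl b k M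
      + (if 0 ≤ (k:ℤ) + v ∧ (k:ℤ) + v < M then ((1 + b) * ((-v : ℤ) : K)) • JL b ((k:ℤ) + v) else 0)
      + (if 0 ≤ -v ∧ -v < (M:ℤ) then ((1 + b) * ((-v : ℤ) : K)) • JL b ((k:ℤ) + v) else 0) := by
  unfold Tl
  rw [Finset.sum_mul, Finset.mul_sum]
  have key : ∀ n ∈ Finset.range M,
      (JL b ((k:ℤ) - n) * JL b n) * JL b v
        = JL b v * (JL b ((k:ℤ) - n) * JL b n)
          + (if (n:ℤ) = (k:ℤ) + v then ((1 + b) * ((-v:ℤ) : K)) • JL b ((k:ℤ)+v) else 0)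
          + (if (n:ℤ) = -v then ((1 + b) * ((-v:ℤ) : K)) • JL b ((k:ℤ)+v) else 0) := by
    intro n _
    have e1 : (JL b ((k:ℤ) - n) * JL b n) * JL b v
        = JL b v * (JL b ((k:ℤ) - n) * JL b n)
          + (if ((k:ℤ)-n) + v = 0 then (1 + b) * ((((k:ℤ)-(n:ℤ)) : ℤ) : K) else 0) • JL b (n:ℤ)
          + (if (n:ℤ) + v = 0 then (1 + b) * (((n:ℤ) : ℤ) : K) else 0) • JL b ((k:ℤ)-n) := by
      calc (JL b ((k:ℤ) - n) * JL b n) * JL b v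
          = JL b ((k:ℤ) - n) * (JL b n * JL b v) := by rw [mul_assoc]
        _ = JL b ((k:ℤ) - n) * (JL b v * JL b n
              + (if (n:ℤ) + v = 0 then (1 + b) * (((n:ℤ):ℤ) : K) else 0) • 1) := by
            rw [JL_comm b (n:ℤ) v]
        _ = (JL b ((k:ℤ) - n) * JL b v) * JL b n
              + (if (n:ℤ) + v = 0 then (1 + b) * (((n:ℤ):ℤ) : K) else 0) • JL b ((k:ℤ)-n) := by
            rw [mul_add, mul_smul_comm, mul_one, mul_assoc]
        _ = (JL b v * JL b ((k:ℤ) - n)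
              + (if ((k:ℤ)-n) + v = 0 then (1 + b) * ((((k:ℤ)-(n:ℤ)):ℤ) : K) else 0) • 1) * JL b n
              + (if (n:ℤ) + v = 0 then (1 + b) * (((n:ℤ):ℤ) : K) else 0) • JL b ((k:ℤ)-n) := by
            rw [JL_comm b ((k:ℤ)-n) v]
        _ = JL b v * (JL b ((k:ℤ) - n) * JL b n)
              + (if ((k:ℤ)-n) + v = 0 then (1 + b) * ((((k:ℤ)-(n:ℤ)):ℤ) : K) else 0) • JL b (n:ℤ)
              + (if (n:ℤ) + v = 0 then (1 + b) * (((n:ℤ):ℤ) : K) else 0) • JL b ((k:ℤ)-n) := by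
            rw [add_mul, smul_mul_assoc, one_mul, mul_assoc]
    rw [e1]
    congr 1
    · congr 1
      by_cases h : (n:ℤ) = (k:ℤ) + v
      · rw [show (k:ℤ) - (n:ℤ) = -v by omega, if_pos (by ring), if_pos h, h]
      · rw [if_neg (by omega), zero_smul, if_neg h]
    · by_cases h : (n:ℤ) = -v
      · rw [if_pos (by omega), if_pos h, show (k:ℤ) - (n:ℤ) = (k:ℤ) + v by omega,
          show ((n:ℤ) : K) = ((-v : ℤ) : K) by rw [h]]
      · rw [if_neg (by omega), zero_smul, if_neg h]
  rw [Finset.sum_congr rfl key, Finset.sum_add_distrib, Finset.sum_add_distrib,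
    sum_pick, sum_pick]
def dd (k l m : ℕ) : ℤ :=
  (if l ≤ m then (m:ℤ) - l else 0) + (if m ≤ k + l then (m:ℤ) - l else 0)
    + (if k ≤ m then (k:ℤ) - m else 0) - ((k:ℤ) - l)

lemma dd_tail {k l m : ℕ} (h : k + l < m) : dd k l m = 0 := by
  unfold dd; split_ifs <;> omega

lemma dd_reflect {k l m : ℕ} (h : m ≤ k + l) : dd k l (k + l - m) = - dd k l m := by
  unfold dd; split_ifs <;> omega

lemma dd_fix {k l m : ℕ} (h : k + l - m = m) (h2 : m ≤ k + l) : dd k l m = 0 := by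
  have := dd_reflect h2
  rw [h] at this
  omega

lemma residual_zero (b : K) (k l M : ℕ) (hkl : (k:ℤ) + l ≠ 0) (hM : k + l < M) :
    ∑ m ∈ Finset.range M, ((dd k l m : K)) • (JL b ((k:ℤ) + l - m) * JL b (m:ℤ)) = 0 := by
  rw [← Finset.sum_subset (Finset.range_subset_range.2 (by omega : k + l + 1 ≤ M))
    (fun m _ hm => by
      rw [dd_tail (by simpa using hm), Int.cast_zero, zero_smul])]
  refine Finset.sum_involution (fun m _ => k + l - m) ?h1 ?h3 ?gmem ?h4
  case gmem =>
    intro m hm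
    simp only [Finset.mem_range] at hm ⊢
    omega
  case h4 =>
    intro m hm
    simp only [Finset.mem_range] at hm
    omega
  case h1 =>
    intro m hm
    have hm' : m ≤ k + l := by have := Finset.mem_range.1 hm; omega
    have hc : ((k + l - m : ℕ) : ℤ) = (k:ℤ) + l - m := by omega
    have hG : JL b ((k:ℤ) + l - ((k + l - m : ℕ) : ℤ)) * JL b ((k + l - m : ℕ) : ℤ)
        = JL b ((k:ℤ) + l - m) * JL b (m:ℤ) := by
      rw [hc, show (k:ℤ) + l - ((k:ℤ) + l - m) = (m:ℤ) by ring]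
      rw [JL_comm b (m:ℤ) ((k:ℤ) + l - m), if_neg (by omega), zero_smul, add_zero]
    rw [hG, dd_reflect hm', Int.cast_neg]
    module
  case h3 =>
    intro m hm hne
    have hm' : m ≤ k + l := by have := Finset.mem_range.1 hm; omega
    intro h
    apply hne
    rw [dd_fix h hm', Int.cast_zero, zero_smul]
lemma shift_sum {α : Type*} [AddCommMonoid α] (H : ℕ → α) (k M : ℕ) :
    ∑ m ∈ Finset.range M, (if k + m < M then H (k + m) else 0)
      = ∑ m ∈ Finset.range M, (if k ≤ m then H m else 0) := by
  classical
  rw [← Finset.sum_filter, ← Finset.sum_filter]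
  have h1 : (Finset.range M).filter (fun m => k + m < M) = Finset.range (M - k) := by
    ext m; simp only [Finset.mem_filter, Finset.mem_range]; omega
  have h2 : (Finset.range M).filter (fun m => k ≤ m) = Finset.Ico k M := by
    ext m; simp only [Finset.mem_filter, Finset.mem_range, Finset.mem_Ico]; omega
  rw [h1, h2, Finset.sum_Ico_eq_sum_range]
lemma cross_term (b : K) (k l M : ℕ) (hM : k + l < M) (m : ℕ) (hm : m < M) :
    Tl b k M * (JL b ((l:ℤ) - m) * JL b (m:ℤ)) - (JL b ((l:ℤ) - m) * JL b (m:ℤ)) * Tl b k M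
      = (if m ≤ k + l then ((1+b) * ((((m:ℤ) - l) : ℤ) : K)) • (JL b ((k:ℤ)+l-m) * JL b (m:ℤ)) else 0)
      + (if l ≤ m then ((1+b) * ((((m:ℤ) - l) : ℤ) : K)) • (JL b ((k:ℤ)+l-m) * JL b (m:ℤ)) else 0)
      + (if k + m < M then ((1+b) * ((-(m:ℤ) : ℤ) : K)) • (JL b ((l:ℤ)-m) * JL b ((k:ℤ)+m)) else 0) := by
  have h1 := Top_mul_JL b k M ((l:ℤ) - m)
  have h2 := Top_mul_JL b k M (m:ℤ)
  have expand : Tl b k M * (JL b ((l:ℤ) - m) * JL b (m:ℤ))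
      = (JL b ((l:ℤ) - m) * JL b (m:ℤ)) * Tl b k M
        + (JL b ((l:ℤ) - m) *
            (if 0 ≤ (k:ℤ) + (m:ℤ) ∧ (k:ℤ) + (m:ℤ) < M then
              ((1 + b) * ((-(m:ℤ) : ℤ) : K)) • JL b ((k:ℤ) + (m:ℤ)) else 0)
          + JL b ((l:ℤ) - m) *
            (if 0 ≤ -(m:ℤ) ∧ -(m:ℤ) < (M:ℤ) then
              ((1 + b) * ((-(m:ℤ) : ℤ) : K)) • JL b ((k:ℤ) + (m:ℤ)) else 0)
          + (if 0 ≤ (k:ℤ) + ((l:ℤ) - m) ∧ (k:ℤ) + ((l:ℤ) - m) < M then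
              ((1 + b) * ((-((l:ℤ) - m) : ℤ) : K)) • JL b ((k:ℤ) + ((l:ℤ) - m)) else 0) * JL b (m:ℤ)
          + (if 0 ≤ -((l:ℤ) - m) ∧ -((l:ℤ) - m) < (M:ℤ) then
              ((1 + b) * ((-((l:ℤ) - m) : ℤ) : K)) • JL b ((k:ℤ) + ((l:ℤ) - m)) else 0) * JL b (m:ℤ)) := by
    rw [← mul_assoc, h1, add_mul, add_mul, mul_assoc (JL b ((l:ℤ) - m)), h2, mul_add, mul_add,
      ← mul_assoc]
    abel
  rw [expand]
  have p1 : JL b ((l:ℤ) - m) *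
      (if 0 ≤ (k:ℤ) + (m:ℤ) ∧ (k:ℤ) + (m:ℤ) < M then
        ((1 + b) * ((-(m:ℤ) : ℤ) : K)) • JL b ((k:ℤ) + (m:ℤ)) else 0)
      = (if k + m < M then ((1+b) * ((-(m:ℤ) : ℤ) : K)) • (JL b ((l:ℤ)-m) * JL b ((k:ℤ)+m)) else 0) := by
    by_cases hc : k + m < M
    · rw [if_pos (by constructor <;> omega), if_pos hc, mul_smul_comm]
    · rw [if_neg (by omega), if_neg hc, mul_zero]
  have p2 : JL b ((l:ℤ) - m) *
      (if 0 ≤ -(m:ℤ) ∧ -(m:ℤ) < (M:ℤ) then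
        ((1 + b) * ((-(m:ℤ) : ℤ) : K)) • JL b ((k:ℤ) + (m:ℤ)) else 0) = 0 := by
    by_cases hc : m = 0
    · subst hc
      rw [if_pos (by constructor <;> omega)]
      simp
    · rw [if_neg (by omega), mul_zero]
  have p3 : (if 0 ≤ (k:ℤ) + ((l:ℤ) - m) ∧ (k:ℤ) + ((l:ℤ) - m) < M then
        ((1 + b) * ((-((l:ℤ) - m) : ℤ) : K)) • JL b ((k:ℤ) + ((l:ℤ) - m)) else 0) * JL b (m:ℤ)
      = (if m ≤ k + l then ((1+b) * ((((m:ℤ) - l) : ℤ) : K)) • (JL b ((k:ℤ)+l-m) * JL b (m:ℤ)) else 0) := by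
    by_cases hc : m ≤ k + l
    · rw [if_pos (by constructor <;> omega), if_pos hc, smul_mul_assoc,
        show -((l:ℤ) - m) = (m:ℤ) - l by ring, show (k:ℤ) + ((l:ℤ) - m) = (k:ℤ) + l - m by ring]
    · rw [if_neg (by omega), if_neg hc, zero_mul]
  have p4 : (if 0 ≤ -((l:ℤ) - m) ∧ -((l:ℤ) - m) < (M:ℤ) then
        ((1 + b) * ((-((l:ℤ) - m) : ℤ) : K)) • JL b ((k:ℤ) + ((l:ℤ) - m)) else 0) * JL b (m:ℤ)
      = (if l ≤ m then ((1+b) * ((((m:ℤ) - l) : ℤ) : K)) • (JL b ((k:ℤ)+l-m) * JL b (m:ℤ)) else 0) := by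
    by_cases hc : l ≤ m
    · rw [if_pos (by constructor <;> omega), if_pos hc, smul_mul_assoc,
        show -((l:ℤ) - m) = (m:ℤ) - l by ring, show (k:ℤ) + ((l:ℤ) - m) = (k:ℤ) + l - m by ring]
    · rw [if_neg (by omega), if_neg hc, zero_mul]
  rw [p1, p2, p3, p4]
  abel
lemma ite_smul_zero (c : Prop) [Decidable c] (s : K) (x : Module.End K (MvPolynomial ℕ K)) :
    (if c then s • x else 0) = (if c then s else (0:K)) • x := by
  split_ifs
  · rfl
  · rw [zero_smul]

lemma TT_comm (b : K) (k l M : ℕ) (hkl : (k:ℤ) + l ≠ 0) (hM : k + l < M) :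
    Tl b k M * Tl b l M - Tl b l M * Tl b k M
      = ((1 + b) * (((k:ℤ) - l : ℤ) : K)) • Tl b (k + l) M := by
  have e1 : Tl b k M * Tl b l M - Tl b l M * Tl b k M
      = ∑ m ∈ Finset.range M,
          (Tl b k M * (JL b ((l:ℤ) - m) * JL b (m:ℤ))
            - (JL b ((l:ℤ) - m) * JL b (m:ℤ)) * Tl b k M) := by
    conv_lhs => rw [show Tl b l M = ∑ n ∈ Finset.range M, JL b ((l:ℤ) - n) * JL b (n:ℤ) from rfl]
    rw [Finset.mul_sum, Finset.sum_mul, ← Finset.sum_sub_distrib]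
  rw [e1, Finset.sum_congr rfl (fun m hm => cross_term b k l M hM m (Finset.mem_range.1 hm))]
  have hF3 : ∀ m ∈ Finset.range M,
      (if k + m < M then ((1+b) * ((-(m:ℤ) : ℤ) : K)) • (JL b ((l:ℤ)-m) * JL b ((k:ℤ)+m)) else 0)
        = (if k + m < M then
            ((1+b) * (((k:ℤ) - ((k+m : ℕ):ℤ) : ℤ) : K)) •
              (JL b ((k:ℤ)+l-((k+m:ℕ):ℤ)) * JL b ((k+m:ℕ):ℤ)) else 0) := by
    intro m _
    have c1 : ((k+m:ℕ):ℤ) = (k:ℤ) + (m:ℤ) := by push_cast; ring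
    rw [c1, show (k:ℤ) - ((k:ℤ)+(m:ℤ)) = -(m:ℤ) by ring,
      show (k:ℤ)+(l:ℤ) - ((k:ℤ)+(m:ℤ)) = (l:ℤ) - (m:ℤ) by ring]
  have hshift := shift_sum
    (fun t => ((1+b) * (((k:ℤ) - (t:ℤ) : ℤ) : K)) • (JL b ((k:ℤ)+l-(t:ℤ)) * JL b (t:ℤ))) k M
  rw [Finset.sum_add_distrib, Finset.sum_add_distrib, Finset.sum_congr rfl hF3]
  rw [show (∑ m ∈ Finset.range M, if k + m < M then
        ((1+b) * (((k:ℤ) - ((k+m : ℕ):ℤ) : ℤ) : K)) •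
          (JL b ((k:ℤ)+l-((k+m:ℕ):ℤ)) * JL b ((k+m:ℕ):ℤ)) else 0)
      = ∑ m ∈ Finset.range M, if k ≤ m then
          ((1+b) * (((k:ℤ) - (m:ℤ) : ℤ) : K)) • (JL b ((k:ℤ)+l-(m:ℤ)) * JL b (m:ℤ)) else 0
      from hshift]
  rw [← Finset.sum_add_distrib, ← Finset.sum_add_distrib]
  have key : ∀ m ∈ Finset.range M,
      ((if m ≤ k + l then ((1+b) * ((((m:ℤ) - l) : ℤ) : K)) • (JL b ((k:ℤ)+l-m) * JL b (m:ℤ)) else 0)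
        + (if l ≤ m then ((1+b) * ((((m:ℤ) - l) : ℤ) : K)) • (JL b ((k:ℤ)+l-m) * JL b (m:ℤ)) else 0)
        + (if k ≤ m then ((1+b) * (((k:ℤ) - (m:ℤ) : ℤ) : K)) • (JL b ((k:ℤ)+l-(m:ℤ)) * JL b (m:ℤ)) else 0))
      = ((1 + b) * (((k:ℤ) - l : ℤ) : K)) • (JL b ((k:ℤ)+l-m) * JL b (m:ℤ))
        + (1 + b) • (((dd k l m : ℤ) : K) • (JL b ((k:ℤ)+l-m) * JL b (m:ℤ))) := by
    intro m _
    rw [ite_smul_zero, ite_smul_zero, ite_smul_zero, ← add_smul, ← add_smul, smul_smul, ← add_smul]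
    congr 1
    unfold dd
    split_ifs <;> push_cast <;> ring
  rw [Finset.sum_congr rfl key, Finset.sum_add_distrib, ← Finset.smul_sum, ← Finset.smul_sum,
    residual_zero b k l M hkl hM, smul_zero, add_zero]
  have hT : Tl b (k + l) M = ∑ m ∈ Finset.range M, JL b ((k:ℤ)+l-(m:ℤ)) * JL b (m:ℤ) := by
    unfold Tl
    refine Finset.sum_congr rfl fun m _ => ?_
    have hc : ((k + l : ℕ) : ℤ) - (m:ℤ) = (k:ℤ) + l - m := by push_cast; ring
    rw [hc]
  rw [hT]
lemma TD_comm (b : K) (k l M : ℕ) (hM : k + l < M) :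
    Tl b k M * ((b * (l:K)) • JL b (l:ℤ)) - ((b * (l:K)) • JL b (l:ℤ)) * Tl b k M
      = (-((1+b) * b * (l:K)^2)) • JL b ((k:ℤ) + (l:ℤ)) := by
  have hsub : Tl b k M * JL b (l:ℤ) - JL b (l:ℤ) * Tl b k M
      = (if 0 ≤ (k:ℤ) + l ∧ (k:ℤ) + l < M then ((1+b) * ((-(l:ℤ):ℤ):K)) • JL b ((k:ℤ)+l) else 0)
        + (if 0 ≤ -(l:ℤ) ∧ -(l:ℤ) < (M:ℤ) then ((1+b)*((-(l:ℤ):ℤ):K)) • JL b ((k:ℤ)+l) else 0) := by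
    rw [Top_mul_JL b k M (l:ℤ)]; abel
  by_cases hl : l = 0
  · subst hl; simp
  · have h2 : Tl b k M * JL b (l:ℤ) - JL b (l:ℤ) * Tl b k M
        = ((1+b) * ((-(l:ℤ):ℤ):K)) • JL b ((k:ℤ)+l) := by
      rw [hsub, if_pos ⟨by omega, by omega⟩, if_neg (by omega), add_zero]
    calc Tl b k M * ((b * (l:K)) • JL b (l:ℤ)) - ((b * (l:K)) • JL b (l:ℤ)) * Tl b k M
        = (b * (l:K)) • (Tl b k M * JL b (l:ℤ) - JL b (l:ℤ) * Tl b k M) := by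
          rw [smul_sub, mul_smul_comm, smul_mul_assoc]
      _ = (b * (l:K)) • (((1+b) * ((-(l:ℤ):ℤ):K)) • JL b ((k:ℤ)+l)) := by rw [h2]
      _ = (-((1+b) * b * (l:K)^2)) • JL b ((k:ℤ) + (l:ℤ)) := by
          rw [smul_smul]; congr 1; push_cast; ring

lemma DD_comm (b : K) (k l : ℕ) (hkl : (k:ℤ) + l ≠ 0) :
    ((b*(k:K)) • JL b (k:ℤ)) * ((b*(l:K)) • JL b (l:ℤ))
      - ((b*(l:K)) • JL b (l:ℤ)) * ((b*(k:K)) • JL b (k:ℤ)) = 0 := by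
  have h := JL_comm b (k:ℤ) (l:ℤ)
  rw [if_neg hkl, zero_smul, add_zero] at h
  rw [smul_mul_assoc, mul_smul_comm, smul_mul_assoc, mul_smul_comm, smul_smul, smul_smul,
    mul_comm (b*(l:K)) (b*(k:K)), h, sub_self]

lemma SS_comm (b : K) (k l M : ℕ) (hkl : (k:ℤ) + l ≠ 0) (hM : k + l < M) :
    Sl b k M * Sl b l M - Sl b l M * Sl b k M
      = ((1 + b) * ((k:K) - (l:K))) • Sl b (k + l) M := by
  have h1 := TT_comm b k l M hkl hM
  have h2 := TD_comm b k l M hM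
  have h3 := TD_comm b l k M (by omega)
  have h4 := DD_comm b k l hkl
  have expand : Sl b k M * Sl b l M - Sl b l M * Sl b k M
      = (Tl b k M * Tl b l M - Tl b l M * Tl b k M)
        + (Tl b k M * ((b * (l:K)) • JL b (l:ℤ)) - ((b * (l:K)) • JL b (l:ℤ)) * Tl b k M)
        + (-(Tl b l M * ((b * (k:K)) • JL b (k:ℤ)) - ((b * (k:K)) • JL b (k:ℤ)) * Tl b l M))
        + (((b*(k:K)) • JL b (k:ℤ)) * ((b*(l:K)) • JL b (l:ℤ))
            - ((b*(l:K)) • JL b (l:ℤ)) * ((b*(k:K)) • JL b (k:ℤ))) := by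
    unfold Sl
    simp only [add_mul, mul_add, smul_mul_assoc, mul_smul_comm]
    match_scalars <;> ring
  rw [expand, h1, h2, h3, h4, add_zero]
  unfold Sl
  rw [show ((l:ℤ) + (k:ℤ)) = (k:ℤ) + (l:ℤ) by ring,
    show (((k + l : ℕ)):ℤ) = (k:ℤ) + (l:ℤ) by push_cast; ring]
  have hc1 : (((k:ℤ) - l : ℤ) : K) = (k:K) - (l:K) := by push_cast; ring
  have hc2 : (((k + l : ℕ)) : K) = (k:K) + (l:K) := by push_cast; ring
  rw [hc1, hc2, smul_add, smul_smul]
  match_scalars <;> ring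
lemma exists_bound (P : MvPolynomial ℕ K) :
    ∃ B : ℕ, 1 ≤ B ∧ ∀ m : ℕ, B ≤ m → pderiv m P = 0 := by
  refine ⟨P.vars.sup id + 1, by omega, fun m hm => ?_⟩
  apply pderiv_eq_zero_of_notMem_vars
  intro hmem
  have := Finset.le_sup (f := id) hmem
  simp only [id] at this
  omega

lemma bd_JL (b : K) {B : ℕ} {Z : MvPolynomial ℕ K} (hZ : ∀ m : ℕ, B ≤ m → pderiv m Z = 0)
    {u : ℤ} (hu : -u < (B:ℤ)) : ∀ m : ℕ, B ≤ m → pderiv m (JL b u Z) = 0 := by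
  intro m hm
  rcases lt_trichotomy u 0 with h | h | h
  · rw [JL_neg b h, pderiv_mul, pderiv_X_of_ne (show (-u).toNat ≠ m by omega), hZ m hm,
      zero_mul, mul_zero, add_zero]
  · rw [h, JL_zero_idx]
    simp
  · rw [JL_pos b h, Derivation.map_smul, pderiv_comm', hZ m hm, map_zero, smul_zero]

lemma bd_JL0 (b : K) {B : ℕ} {Z : MvPolynomial ℕ K} (hZ : ∀ m : ℕ, B ≤ m → pderiv m Z = 0)
    {n : ℕ} (hn : B ≤ n) : JL b (n:ℤ) Z = 0 := by
  rcases Nat.eq_zero_or_pos n with h | h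
  · subst h
    rw [show ((0:ℕ):ℤ) = 0 from rfl, JL_zero_idx]
    rfl
  · have h2 := hZ n hn
    rw [JL_pos b (by exact_mod_cast h : (0:ℤ) < (n:ℤ))]
    simp [h2]

lemma bd_S (b : K) {M : ℕ} (hM1 : 1 ≤ M) {Q : MvPolynomial ℕ K}
    (hQ : ∀ m : ℕ, M ≤ m → pderiv m Q = 0) (l : ℕ) :
    ∀ m : ℕ, M ≤ m → pderiv m (Sl b l M Q) = 0 := by
  intro m hm
  unfold Sl Tl
  rw [LinearMap.add_apply, LinearMap.smul_apply, map_add, Derivation.map_smul, LinearMap.sum_apply,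
    map_sum]
  have hterm : ∀ n ∈ Finset.range M,
      pderiv m ((JL b ((l:ℤ) - n) * JL b (n:ℤ)) Q) = 0 := by
    intro n hn
    have hn' := Finset.mem_range.1 hn
    rw [Module.End.mul_apply]
    exact bd_JL b (bd_JL b hQ (by omega) ) (by omega) m hm
  rw [Finset.sum_eq_zero hterm, bd_JL b hQ (by omega) m hm, smul_zero, add_zero]
lemma Jc_zero (b : K) (u : ℤ) : Jc b u 0 = 0 := by
  unfold Jc; split_ifs <;> simp

lemma Aop1_eq (b : K) (n : ℕ) (hn : 1 ≤ n) (Q : MvPolynomial ℕ K) :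
    Aop b 1 n Q = Jc b ((n:ℤ)-1) ((1+b)⁻¹ • Q) := by
  have hdef : Aop b 1 n Q
      = (∑ᶠ m : ℕ, if 1 ≤ m then Jc b ((n:ℤ) - m) (Aop b 0 m Q) else 0)
        + (b * ((n:K) - 1)) • Aop b 0 n Q := rfl
  rw [hdef]
  have hA01 : Aop b 0 1 Q = (1+b)⁻¹ • Q := by simp [Aop]
  have hA0 : ∀ m : ℕ, m ≠ 1 → Aop b 0 m Q = 0 := fun m hm => by simp [Aop, hm]
  have hsingle : (∑ᶠ m : ℕ, if 1 ≤ m then Jc b ((n:ℤ) - m) (Aop b 0 m Q) else 0)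
      = Jc b ((n:ℤ) - 1) (Aop b 0 1 Q) := by
    refine finsum_eq_single _ 1 fun m hm => ?_
    rcases Nat.eq_zero_or_pos m with h | h
    · subst h; rw [if_neg (by omega)]
    · rw [if_pos (show (1:ℕ) ≤ m from h), hA0 m hm, Jc_zero]
  rw [hsingle, hA01]
  by_cases hn1 : n = 1
  · subst hn1
    simp
  · rw [hA0 n hn1, smul_zero, add_zero]

lemma Aop1_eq' (b : K) (n : ℕ) (hn : 1 ≤ n) (Q : MvPolynomial ℕ K) :
    Aop b 1 n Q = (1+b)⁻¹ • JL b ((n:ℤ)-1) Q := by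
  rw [Aop1_eq b n hn, ← JL_apply, map_smul]

lemma rep2 (b : K) (l M : ℕ) (hM1 : 1 ≤ M) (Q : MvPolynomial ℕ K)
    (hQ : ∀ m : ℕ, M ≤ m → pderiv m Q = 0) :
    Aop b 2 (l+1) Q = (1+b)⁻¹ • Sl b l M Q := by
  have hdef : Aop b 2 (l+1) Q
      = (∑ᶠ n : ℕ, if 1 ≤ n then Jc b (((l+1:ℕ):ℤ) - n) (Aop b 1 n Q) else 0)
        + (b * (((l+1:ℕ):K) - 1)) • Aop b 1 (l+1) Q := rfl
  rw [hdef]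
  have hfun : (fun n : ℕ => if 1 ≤ n then Jc b (((l+1:ℕ):ℤ) - n) (Aop b 1 n Q) else 0)
      = fun n : ℕ => if 1 ≤ n then
          (1+b)⁻¹ • JL b (((l+1:ℕ):ℤ) - n) (JL b ((n:ℤ)-1) Q) else 0 := by
    funext n
    by_cases hn : 1 ≤ n
    · rw [if_pos hn, if_pos hn, Aop1_eq' b n hn, ← JL_apply, map_smul]
    · rw [if_neg hn, if_neg hn]
  rw [hfun]
  have hsupp : (Function.support fun n : ℕ => if 1 ≤ n then
      (1+b)⁻¹ • JL b (((l+1:ℕ):ℤ) - n) (JL b ((n:ℤ)-1) Q) else 0) ⊆ ↑(Finset.range (M+1)) := by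
    intro n hn
    simp only [Function.mem_support] at hn
    by_contra hcon
    apply hn
    have hnM : M + 1 ≤ n := by
      by_contra h2
      exact hcon (by simp only [Finset.coe_range, Set.mem_Iio]; omega)
    have h1n : 1 ≤ n := by omega
    rw [if_pos h1n, show ((n:ℤ) - 1) = ((n-1 : ℕ):ℤ) by omega,
      bd_JL0 b hQ (show M ≤ n - 1 by omega), map_zero, smul_zero]
  rw [finsum_eq_sum_of_support_subset _ hsupp, Finset.sum_range_succ', if_neg (by omega),
    add_zero]
  have hterm : ∀ n ∈ Finset.range M,
      (if 1 ≤ n + 1 then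
          (1+b)⁻¹ • JL b (((l+1:ℕ):ℤ) - (n+1:ℕ)) (JL b (((n+1:ℕ):ℤ)-1) Q) else 0)
        = (1+b)⁻¹ • ((JL b ((l:ℤ) - n) * JL b (n:ℤ)) Q) := by
    intro n _
    rw [if_pos (by omega), show (((l+1:ℕ):ℤ) - ((n+1:ℕ):ℤ)) = (l:ℤ) - n by push_cast; ring,
      show (((n+1:ℕ):ℤ) - 1) = (n:ℤ) by push_cast; ring, Module.End.mul_apply]
  rw [Finset.sum_congr rfl hterm, ← Finset.smul_sum]
  rw [Aop1_eq' b (l+1) (by omega), show (((l+1:ℕ):ℤ) - 1) = (l:ℤ) by push_cast; ring,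
    show ((((l+1:ℕ)):K) - 1) = (l:K) by push_cast; ring]
  rw [smul_comm (b * (l:K)) ((1+b)⁻¹), ← smul_add]
  congr 1
  unfold Sl Tl
  rw [LinearMap.add_apply, LinearMap.sum_apply, LinearMap.smul_apply]

lemma Aop2_zero (b : K) (hb : (1:K) + b = 0) (i : ℕ) (Q : MvPolynomial ℕ K) :
    Aop b 2 i Q = 0 := by
  have hA0 : ∀ (n : ℕ) (Q' : MvPolynomial ℕ K), Aop b 0 n Q' = 0 := by
    intro n Q'; simp [Aop, hb]
  have hA1 : ∀ (n : ℕ) (Q' : MvPolynomial ℕ K), Aop b 1 n Q' = 0 := by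
    intro n Q'
    have hdef : Aop b 1 n Q'
        = (∑ᶠ m : ℕ, if 1 ≤ m then Jc b ((n:ℤ) - m) (Aop b 0 m Q') else 0)
          + (b * ((n:K) - 1)) • Aop b 0 n Q' := rfl
    rw [hdef, hA0 n Q', smul_zero, add_zero]
    have hz : (fun m : ℕ => if 1 ≤ m then Jc b ((n:ℤ) - m) (Aop b 0 m Q') else 0)
        = fun _ => 0 := by
      funext m
      rw [hA0, Jc_zero]
      exact ite_self 0
    rw [hz, finsum_zero]
  have hdef2 : Aop b 2 i Q
      = (∑ᶠ n : ℕ, if 1 ≤ n then Jc b ((i:ℤ) - n) (Aop b 1 n Q) else 0)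
        + (b * ((i:K) - 1)) • Aop b 1 i Q := rfl
  rw [hdef2, hA1 i Q, smul_zero, add_zero]
  have hz : (fun n : ℕ => if 1 ≤ n then Jc b ((i:ℤ) - n) (Aop b 1 n Q) else 0)
      = fun _ => 0 := by
    funext n
    rw [hA1, Jc_zero]
    exact ite_self 0
  rw [hz, finsum_zero]

/-- The operators `A_i(2)` satisfy the half-Virasoro relation
`[A_i(2), A_j(2)] = (i-j)·A_{i+j-1}(2)`. -/
theorem commutator_A2_A2 (b : K) (i j : ℕ) (hi : 1 ≤ i) (hj : 1 ≤ j) :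
    commOp (Aop b 2 i) (Aop b 2 j) = ((i : K) - (j : K)) • Aop b 2 (i + j - 1) := by
  by_cases hb : (1:K) + b = 0
  · funext P
    simp only [commOp, Pi.smul_apply, Aop2_zero b hb, sub_zero, smul_zero]
  · by_cases hij : i = j
    · subst hij
      funext P
      simp only [commOp, Pi.smul_apply, sub_self, zero_smul]
    · obtain ⟨k, hk⟩ : ∃ k, i = k + 1 := ⟨i - 1, by omega⟩
      obtain ⟨l, hl⟩ : ∃ l, j = l + 1 := ⟨j - 1, by omega⟩
      subst hk hl
      have hkl : (k:ℤ) + (l:ℤ) ≠ 0 := fun h => hij (by omega)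
      funext P
      obtain ⟨B, hB1, hBP⟩ := exists_bound P
      set M := B + k + l + 1 with hMdef
      have hM1 : 1 ≤ M := by omega
      have hMkl : k + l < M := by omega
      have hMP : ∀ m : ℕ, M ≤ m → pderiv m P = 0 := fun m hm => hBP m (by omega)
      have hSl : ∀ m : ℕ, M ≤ m → pderiv m ((1+b)⁻¹ • Sl b l M P) = 0 := by
        intro m hm
        rw [Derivation.map_smul, bd_S b hM1 hMP l m hm, smul_zero]
      have hSk : ∀ m : ℕ, M ≤ m → pderiv m ((1+b)⁻¹ • Sl b k M P) = 0 := by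
        intro m hm
        rw [Derivation.map_smul, bd_S b hM1 hMP k m hm, smul_zero]
      simp only [commOp, Pi.smul_apply]
      rw [show k + 1 + (l + 1) - 1 = (k + l) + 1 by omega]
      rw [rep2 b l M hM1 P hMP, rep2 b k M hM1 P hMP,
        rep2 b k M hM1 _ hSl, rep2 b l M hM1 _ hSk,
        rep2 b (k+l) M hM1 P hMP]
      rw [map_smul, map_smul, smul_smul, smul_smul, smul_smul, ← smul_sub]
      have hcomp := congrArg (fun (F : Module.End K (MvPolynomial ℕ K)) => F P)
        (SS_comm b k l M hkl hMkl)
      simp only [LinearMap.sub_apply, Module.End.mul_apply, LinearMap.smul_apply] at hcomp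
      rw [hcomp, smul_smul]
      congr 1
      have h1b : (1+b)⁻¹ * (1+b) = 1 := inv_mul_cancel₀ hb
      push_cast
      field_simp
      ring
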